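/- Let Θ be a nonempty index set and (κ_θ)_{θ∈Θ} a family of Markov kernels on ℝ^d with nonlinear Markov operator P̄f(x) = sup_{θ∈Θ} ∫ f dκ_θ(x,·). Let Φ : [0,∞) → [0,∞) be a continuous strictly increasing bijection (so Φ(0) = 0 and Φ(r) → ∞) such that r ↦ r·Φ⁻¹(r) is convex on [0,∞), let Ψ : ℝ^d × ℝ^d → [0,∞) be Borel measurable, and assume the Harnack-type inequality Φ(P̄f(x)) ≤ P̄(Φ∘f)(y)·e^{Ψ(x,y)} for all bounded Borel measurable f ≥ 0 and all x, y ∈ ℝ^d. Let μ be a probability measure on ℝ^d, suppose there are jointly Borel measurable p_θ : ℝ^d × ℝ^d → [0,∞) with κ_θ(x, A) = ∫_A p_θ(x,z) μ(dz) for all θ, x and Borel A, and let p : ℝ^d × ℝ^d → [0,∞] be a jointly Borel measurable sup-kernel of P̄ with respect to μ satisfying p(x,z) ≥ p_θ(x,z) for all θ, x, z. Then ∫_{ℝ^d} p(x,z)·p(y,z) μ(dz) ≥ e^{−Ψ(x,y)} for all x, y ∈ ℝ^d. -/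

import Mathlib

open MeasureTheory ProbabilityTheory Filter

/-- The nonlinear Markov operator `P̄ f x = ⨆ θ, ∫ f dκ_θ(x,·)` associated with a family
of Markov kernels on `ℝ^d`. -/
noncomputable def nlOp {d : ℕ} {Θ : Type*}
    (κ : Θ → Kernel (EuclideanSpace ℝ (Fin d)) (EuclideanSpace ℝ (Fin d)))
    (f : EuclideanSpace ℝ (Fin d) → ℝ) (x : EuclideanSpace ℝ (Fin d)) : ℝ :=
  ⨆ θ, ∫ y, f y ∂(κ θ x)

theorem stmt_5 {d : ℕ} {Θ : Type*} [Nonempty Θ]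
    (κ : Θ → Kernel (EuclideanSpace ℝ (Fin d)) (EuclideanSpace ℝ (Fin d)))
    (hκ : ∀ θ, IsMarkovKernel (κ θ))
    -- Φ is a continuous strictly increasing bijection of [0,∞) onto itself,
    -- with inverse Φinv, such that r ↦ r·Φ⁻¹(r) is convex on [0,∞)
    (Φ Φinv : ℝ → ℝ)
    (hΦ0 : Φ 0 = 0)
    (hΦcont : ContinuousOn Φ (Set.Ici 0))
    (hΦmono : StrictMonoOn Φ (Set.Ici 0))
    (hΦmaps : Set.MapsTo Φ (Set.Ici 0) (Set.Ici 0))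
    (hΦtop : Tendsto Φ atTop atTop)
    (hΦinv : ∀ r ∈ Set.Ici (0:ℝ), Φinv (Φ r) = r ∧ Φ (Φinv r) = r ∧ 0 ≤ Φinv r)
    (hconv : ConvexOn ℝ (Set.Ici 0) (fun r => r * Φinv r))
    (Ψ : EuclideanSpace ℝ (Fin d) → EuclideanSpace ℝ (Fin d) → ℝ)
    (hΨmeas : Measurable (Function.uncurry Ψ))
    (hΨnonneg : ∀ x y, 0 ≤ Ψ x y)
    (hHarnack : ∀ f : EuclideanSpace ℝ (Fin d) → ℝ, Measurable f → (∀ y, 0 ≤ f y) →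
      (∃ C, ∀ y, f y ≤ C) → ∀ x y,
      Φ (nlOp κ f x) ≤ nlOp κ (fun z => Φ (f z)) y * Real.exp (Ψ x y))
    (μ : Measure (EuclideanSpace ℝ (Fin d))) [IsProbabilityMeasure μ]
    -- densities p_θ of the kernels with respect to μ
    (pθ : Θ → EuclideanSpace ℝ (Fin d) → EuclideanSpace ℝ (Fin d) → ℝ)
    (hpθmeas : ∀ θ, Measurable (Function.uncurry (pθ θ)))
    (hpθ0 : ∀ θ x z, 0 ≤ pθ θ x z)
    (hdens : ∀ θ x (A : Set (EuclideanSpace ℝ (Fin d))), MeasurableSet A →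
      κ θ x A = ∫⁻ z in A, ENNReal.ofReal (pθ θ x z) ∂μ)
    -- p is a sup-kernel of P̄ with respect to μ dominating all the p_θ
    (p : EuclideanSpace ℝ (Fin d) → EuclideanSpace ℝ (Fin d) → ENNReal)
    (hpmeas : Measurable (Function.uncurry p))
    (hsup : ∀ f : EuclideanSpace ℝ (Fin d) → ℝ, Measurable f → (∀ z, 0 ≤ f z) →
      (∃ C, ∀ z, f z ≤ C) → ∀ x,
      ENNReal.ofReal (nlOp κ f x) ≤ ∫⁻ z, p x z * ENNReal.ofReal (f z) ∂μ)
    (hple : ∀ θ x z, ENNReal.ofReal (pθ θ x z) ≤ p x z) :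
    ∀ x y, ENNReal.ofReal (Real.exp (-(Ψ x y))) ≤ ∫⁻ z, p x z * p y z ∂μ := by
  intro x y
  classical
  obtain ⟨θ⟩ := (inferInstance : Nonempty Θ)
  set I : ENNReal := ∫⁻ z, p x z * p y z ∂μ with hI
  -- basic facts about Φinv
  have hΦinv0 : Φinv 0 = 0 := by
    have h := (hΦinv 0 Set.self_mem_Ici).1
    rwa [hΦ0] at h
  have hΦinvNN : ∀ r : ℝ, 0 ≤ r → 0 ≤ Φinv r := fun r hr => (hΦinv r hr).2.2
  have hΦinvMono : ∀ a b : ℝ, 0 ≤ a → a ≤ b → Φinv a ≤ Φinv b := by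
    intro a b ha hab
    by_contra hlt
    push_neg at hlt
    have h1 : Φ (Φinv b) < Φ (Φinv a) :=
      hΦmono (hΦinvNN b (ha.trans hab)) (hΦinvNN a ha) hlt
    rw [(hΦinv a ha).2.1, (hΦinv b (ha.trans hab)).2.1] at h1
    exact absurd hab (not_le.2 h1)
  -- continuous monotone extension of Φinv
  set G : ℝ → ℝ := fun r => if 0 ≤ r then Φinv r else r with hG
  have hGeq : ∀ r : ℝ, 0 ≤ r → G r = Φinv r := fun r hr => if_pos hr
  have hGmono : Monotone G := by
    intro a b hab
    simp only [hG]
    by_cases ha : 0 ≤ a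
    · rw [if_pos ha, if_pos (ha.trans hab)]
      exact hΦinvMono a b ha hab
    · rw [if_neg ha]
      by_cases hb : 0 ≤ b
      · rw [if_pos hb]
        exact (le_of_not_ge ha).trans (hΦinvNN b hb)
      · rw [if_neg hb]; exact hab
  have hGsurj : Function.Surjective G := by
    intro r
    by_cases hr : 0 ≤ r
    · refine ⟨Φ r, ?_⟩
      have h0 : (0:ℝ) ≤ Φ r := hΦmaps hr
      simp only [hG, if_pos h0]
      exact (hΦinv r hr).1
    · exact ⟨r, if_neg hr⟩
  have hGcont : Continuous G := hGmono.continuous_of_surjective hGsurj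
  -- the density of κ θ at x
  set q : EuclideanSpace ℝ (Fin d) → ℝ := fun z => pθ θ x z with hqdef
  have hqmeas : Measurable q := (hpθmeas θ).comp (measurable_prodMk_left)
  have hq0 : ∀ z, 0 ≤ q z := fun z => hpθ0 θ x z
  have hκx : (κ θ) x = μ.withDensity (fun z => ((q z).toNNReal : ENNReal)) := by
    refine Measure.ext fun A hA => ?_
    rw [hdens θ x A hA, withDensity_apply _ hA]
    rfl
  have hqint1 : ∫⁻ z, ENNReal.ofReal (q z) ∂μ = 1 := by
    have h1 : (κ θ) x Set.univ = 1 := measure_univ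
    rwa [hdens θ x _ MeasurableSet.univ, Measure.restrict_univ] at h1
  have hqint : Integrable q μ := by
    refine ⟨hqmeas.aestronglyMeasurable, ?_⟩
    rw [HasFiniteIntegral]
    have : ∀ z, ‖q z‖ₑ = ENNReal.ofReal (q z) := fun z =>
      Real.enorm_eq_ofReal (hq0 z)
    simp only [this, hqint1]
    exact ENNReal.one_lt_top
  -- the truncated densities
  set g : ℕ → EuclideanSpace ℝ (Fin d) → ℝ := fun n z => min (q z) n with hgdef
  have hgmeas : ∀ n, Measurable (g n) := fun n => hqmeas.min measurable_const
  have hg0 : ∀ n z, 0 ≤ g n z := fun n z => le_min (hq0 z) (Nat.cast_nonneg n)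
  have hgle : ∀ n z, g n z ≤ q z := fun n z => min_le_left _ _
  have hgleN : ∀ n z, g n z ≤ (n : ℝ) := fun n z => min_le_right _ _
  have hgint : ∀ n, Integrable (g n) μ := by
    intro n
    refine (integrable_const (n:ℝ)).mono' (hgmeas n).aestronglyMeasurable ?_
    exact Filter.Eventually.of_forall fun z => by
      rw [Real.norm_of_nonneg (hg0 n z)]; exact hgleN n z
  -- integrability of h ∘ g n where h r = r * Φinv r
  have hhgint : ∀ n, Integrable (fun z => g n z * Φinv (g n z)) μ := by
    intro n
    have hmeas2 : Measurable (fun z => g n z * Φinv (g n z)) := by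
      have heq : (fun z => g n z * Φinv (g n z)) = fun z => g n z * G (g n z) :=
        funext fun z => by rw [hGeq _ (hg0 n z)]
      rw [heq]
      exact (hgmeas n).mul (hGcont.measurable.comp (hgmeas n))
    refine (integrable_const ((n:ℝ) * Φinv n)).mono' hmeas2.aestronglyMeasurable ?_
    · refine Filter.Eventually.of_forall fun z => ?_
      rw [Real.norm_of_nonneg (mul_nonneg (hg0 n z) (hΦinvNN _ (hg0 n z)))]
      exact mul_le_mul (hgleN n z) (hΦinvMono _ _ (hg0 n z) (hgleN n z))
        (hΦinvNN _ (hg0 n z)) (Nat.cast_nonneg n)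
  -- m n = ∫ g n dμ
  set m : ℕ → ℝ := fun n => ∫ z, g n z ∂μ with hmdef
  have hm0 : ∀ n, 0 ≤ m n := fun n => integral_nonneg (hg0 n)
  have hqintegral : ∫ z, q z ∂μ = 1 := by
    rw [integral_eq_lintegral_of_nonneg_ae (Filter.Eventually.of_forall hq0)
      hqmeas.aestronglyMeasurable, hqint1, ENNReal.toReal_one]
  have hmtend : Tendsto m atTop (nhds 1) := by
    rw [← hqintegral]
    refine tendsto_integral_of_dominated_convergence q
      (fun n => (hgmeas n).aestronglyMeasurable) hqint ?_ ?_
    · intro n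
      refine Filter.Eventually.of_forall fun z => ?_
      rw [Real.norm_of_nonneg (hg0 n z)]; exact hgle n z
    · refine Filter.Eventually.of_forall fun z => ?_
      have : ∀ᶠ n : ℕ in atTop, g n z = q z := by
        filter_upwards [eventually_ge_atTop ⌈q z⌉₊] with n hn
        exact min_eq_left ((Nat.le_ceil (q z)).trans (Nat.cast_le.2 hn))
      exact Tendsto.congr' (Filter.EventuallyEq.symm this) tendsto_const_nhds
  -- Jensen's inequality
  have hjensen : ∀ n, m n * Φinv (m n) ≤ ∫ z, g n z * Φinv (g n z) ∂μ := by
    intro n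
    have hcont : ContinuousOn (fun r : ℝ => r * Φinv r) (Set.Ici 0) := by
      refine ((continuous_id.mul hGcont).continuousOn).congr fun r hr => ?_
      show r * Φinv r = r * G r; rw [hGeq r hr]
    exact hconv.map_integral_le hcont isClosed_Ici
      (Filter.Eventually.of_forall (hg0 n)) (hgint n) (hhgint n)
  -- the functions f n = Φinv ∘ g n
  set f : ℕ → EuclideanSpace ℝ (Fin d) → ℝ := fun n z => G (g n z) with hfdef
  have hfeq : ∀ n z, f n z = Φinv (g n z) := fun n z => hGeq _ (hg0 n z)
  have hfmeas : ∀ n, Measurable (f n) := fun n => hGcont.measurable.comp (hgmeas n)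
  have hf0 : ∀ n z, 0 ≤ f n z := fun n z => by rw [hfeq]; exact hΦinvNN _ (hg0 n z)
  have hfle : ∀ n z, f n z ≤ Φinv n := fun n z => by
    rw [hfeq]; exact hΦinvMono _ _ (hg0 n z) (hgleN n z)
  have hΦf : ∀ n, (fun z => Φ (f n z)) = g n := by
    intro n
    funext z
    rw [hfeq, (hΦinv _ (hg0 n z)).2.1]
  -- integrability of f n with respect to each κ θ' x
  have hfintκ : ∀ n θ', Integrable (f n) ((κ θ') x) := by
    intro n θ'
    haveI := (hκ θ').isProbabilityMeasure x
    refine (integrable_const (Φinv n)).mono' (hfmeas n).aestronglyMeasurable ?_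
    exact Filter.Eventually.of_forall fun z => by
      rw [Real.norm_of_nonneg (hf0 n z)]; exact hfle n z
  -- lower bound on nlOp κ (f n) x
  have hnlLower : ∀ n, ∫ z, g n z * Φinv (g n z) ∂μ ≤ nlOp κ (f n) x := by
    intro n
    have hbdd : BddAbove (Set.range fun θ' => ∫ z, f n z ∂((κ θ') x)) := by
      refine ⟨Φinv n, ?_⟩
      rintro _ ⟨θ', rfl⟩
      haveI := (hκ θ').isProbabilityMeasure x
      calc ∫ z, f n z ∂((κ θ') x) ≤ ∫ _, Φinv (n:ℝ) ∂((κ θ') x) :=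
            integral_mono (hfintκ n θ') (integrable_const _) (hfle n)
        _ = Φinv (n:ℝ) := by simp
    have h1 : ∫ z, f n z ∂((κ θ) x) ≤ nlOp κ (f n) x := le_ciSup hbdd θ
    refine le_trans ?_ h1
    have hqnn : Measurable fun z => (q z).toNNReal := measurable_real_toNNReal.comp hqmeas
    rw [hκx, integral_withDensity_eq_integral_smul hqnn]
    have heq : ∀ z, (q z).toNNReal • f n z = q z * f n z := by
      intro z
      rw [NNReal.smul_def, Real.coe_toNNReal _ (hq0 z), smul_eq_mul]
    simp only [heq]
    refine integral_mono (hhgint n) ?_ ?_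
    · refine (hqint.bdd_mul (c := Φinv n) (hfmeas n).aestronglyMeasurable ?_).congr ?_
      · exact Filter.Eventually.of_forall fun z => by
          rw [Real.norm_of_nonneg (hf0 n z)]; exact hfle n z
      · exact Filter.Eventually.of_forall fun z => mul_comm _ _
    · intro z
      show g n z * Φinv (g n z) ≤ q z * f n z
      rw [hfeq n z]
      exact mul_le_mul_of_nonneg_right (hgle n z) (hΦinvNN _ (hg0 n z))
  -- nonnegativity of nlOp values
  have hnl0 : ∀ (u : EuclideanSpace ℝ (Fin d) → ℝ), (∀ z, 0 ≤ u z) → ∀ w, 0 ≤ nlOp κ u w := by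
    intro u hu w
    exact Real.iSup_nonneg fun θ' => integral_nonneg hu
  -- the key estimate for each n
  have hkey : ∀ n, ENNReal.ofReal (Φ (m n * Φinv (m n))) ≤ I * ENNReal.ofReal (Real.exp (Ψ x y)) := by
    intro n
    have hchain : Φ (m n * Φinv (m n)) ≤ nlOp κ (g n) y * Real.exp (Ψ x y) := by
      have h1 : Φ (m n * Φinv (m n)) ≤ Φ (nlOp κ (f n) x) := by
        refine hΦmono.monotoneOn (mul_nonneg (hm0 n) (hΦinvNN _ (hm0 n)))
          (hnl0 (f n) (hf0 n) x) ((hjensen n).trans (hnlLower n))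
      refine h1.trans ?_
      have h2 := hHarnack (f n) (hfmeas n) (hf0 n) ⟨Φinv n, hfle n⟩ x y
      rwa [hΦf n] at h2
    calc ENNReal.ofReal (Φ (m n * Φinv (m n)))
        ≤ ENNReal.ofReal (nlOp κ (g n) y * Real.exp (Ψ x y)) := ENNReal.ofReal_le_ofReal hchain
      _ = ENNReal.ofReal (nlOp κ (g n) y) * ENNReal.ofReal (Real.exp (Ψ x y)) :=
          ENNReal.ofReal_mul (hnl0 (g n) (hg0 n) y)
      _ ≤ I * ENNReal.ofReal (Real.exp (Ψ x y)) := by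
          refine mul_le_mul_left ?_ _
          refine (hsup (g n) (hgmeas n) (hg0 n) ⟨n, hgleN n⟩ y).trans ?_
          rw [hI]
          calc ∫⁻ z, p y z * ENNReal.ofReal (g n z) ∂μ
              ≤ ∫⁻ z, p y z * p x z ∂μ := by
                refine lintegral_mono fun z => mul_le_mul_right ?_ _
                exact (ENNReal.ofReal_le_ofReal (hgle n z)).trans (hple θ x z)
            _ = ∫⁻ z, p x z * p y z ∂μ := by
                refine lintegral_congr fun z => mul_comm _ _
  -- take the limit n → ∞
  have hAtend : Tendsto (fun n => Φ (m n * Φinv (m n))) atTop (nhds 1) := by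
    have h1 : Tendsto (fun n => m n * Φinv (m n)) atTop (nhds (Φinv 1)) := by
      have h2 : Tendsto (fun n => m n * G (m n)) atTop (nhds (1 * G 1)) :=
        hmtend.mul ((hGcont.tendsto 1).comp hmtend)
      rw [one_mul, hGeq 1 zero_le_one] at h2
      refine h2.congr fun n => ?_
      rw [hGeq _ (hm0 n)]
    have h3 : Tendsto (fun n => m n * Φinv (m n)) atTop (nhdsWithin (Φinv 1) (Set.Ici 0)) := by
      rw [tendsto_nhdsWithin_iff]
      exact ⟨h1, Filter.Eventually.of_forall fun n =>
        mul_nonneg (hm0 n) (hΦinvNN _ (hm0 n))⟩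
    have h4 := (hΦcont.continuousWithinAt (Set.mem_Ici.2 (hΦinvNN 1 zero_le_one))).tendsto.comp h3
    rwa [(hΦinv 1 (Set.mem_Ici.2 zero_le_one)).2.1] at h4
  have hone : (1 : ENNReal) ≤ I * ENNReal.ofReal (Real.exp (Ψ x y)) := by
    have h5 : Tendsto (fun n => ENNReal.ofReal (Φ (m n * Φinv (m n)))) atTop
        (nhds (ENNReal.ofReal 1)) :=
      (ENNReal.continuous_ofReal.tendsto 1).comp hAtend
    rw [ENNReal.ofReal_one] at h5
    exact le_of_tendsto h5 (Filter.Eventually.of_forall hkey)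
  calc ENNReal.ofReal (Real.exp (-(Ψ x y)))
      = ENNReal.ofReal (Real.exp (-(Ψ x y))) * 1 := (mul_one _).symm
    _ ≤ ENNReal.ofReal (Real.exp (-(Ψ x y))) * (I * ENNReal.ofReal (Real.exp (Ψ x y))) :=
        mul_le_mul_right hone _
    _ = I * (ENNReal.ofReal (Real.exp (-(Ψ x y))) * ENNReal.ofReal (Real.exp (Ψ x y))) := by
        ring
    _ = I := by
        rw [← ENNReal.ofReal_mul (Real.exp_nonneg _), ← Real.exp_add, neg_add_cancel,
          Real.exp_zero, ENNReal.ofReal_one, mul_one]
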